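/- Let 0 < a < b < 1. There exists a constant c > 0, depending only on (a,b), such that for all α ∈ [0,1) and all j ≥ 1, the normalized eigenfunctions satisfy ‖Φ_j‖²_{L²(a,b)} ≥ c; in particular ‖Φ_j‖²_{L²(a,b)} ≥ (c/2)(2−α) for all α ∈ [0,1) and j ≥ 1. -/

import Mathlib

open MeasureTheory Filter Set Topology

/-- The eigensystem of the degenerate operator `P ϑ = -(x^α ϑ')'` on `L²(0,1)`,
with Dirichlet condition at `x = 1` and boundary condition `BC_α` at `x = 0`
(`ϑ(0) = 0` for `α ∈ [0,1)`, `(x^α ϑ')|_{x=0} = 0` for `α ∈ [1,2)`):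
an orthonormal Hilbert basis `Φ` of `L²(0,1)` of eigenfunctions, with
nondecreasing positive eigenvalues `lam` tending to `+∞`. -/
structure EigenSystem (α : ℝ) (lam : ℕ → ℝ) (Φ : ℕ → ℝ → ℝ) : Prop where
  pos : 0 < lam 0
  mono : Monotone lam
  tendsto_atTop : Tendsto lam atTop atTop
  orthonormal : ∀ i j, (∫ x in Ioo (0:ℝ) 1, Φ i x * Φ j x) = if i = j then 1 else 0
  diff : ∀ j, ∀ x ∈ Ioc (0:ℝ) 1, DifferentiableAt ℝ (Φ j) x
  flux_diff : ∀ j, ∀ x ∈ Ioo (0:ℝ) 1, DifferentiableAt ℝ (fun y => y ^ α * deriv (Φ j) y) x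
  eigen : ∀ j, ∀ x ∈ Ioo (0:ℝ) 1, deriv (fun y => y ^ α * deriv (Φ j) y) x = -(lam j * Φ j x)
  weight_int : ∀ j, IntegrableOn (fun x => x ^ α * (deriv (Φ j) x) ^ 2) (Ioo 0 1)
  bdry_one : ∀ j, Φ j 1 = 0
  bdry_zero_weak : α < 1 → ∀ j, Tendsto (Φ j) (nhdsWithin 0 (Ioi 0)) (nhds 0)
  bdry_zero_strong : 1 ≤ α →
    ∀ j, Tendsto (fun x => x ^ α * deriv (Φ j) x) (nhdsWithin 0 (Ioi 0)) (nhds 0)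
  complete : ∀ f : ℝ → ℝ, MemLp f 2 (volume.restrict (Ioo 0 1)) →
    (∀ j, (∫ x in Ioo (0:ℝ) 1, f x * Φ j x) = 0) → f =ᵐ[volume.restrict (Ioo 0 1)] 0



private lemma hasDerivAt_congr' {f : ℝ → ℝ} {u v x : ℝ} (h : HasDerivAt f u x)
    (huv : u = v) : HasDerivAt f v x := huv ▸ h

set_option maxHeartbeats 1000000 in
/-- Key analytic estimate. -/
theorem key_lower_bound
    (a b : ℝ) (ha : 0 < a) (hab : a < b) (hb : b < 1)
    (α : ℝ) (hα0 : 0 ≤ α) (hα1 : α < 1)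
    (L : ℝ) (hL : 0 < L)
    (y : ℝ → ℝ)
    (hyd : ∀ x ∈ Ioo (0:ℝ) 1, DifferentiableAt ℝ y x)
    (hgd : ∀ x ∈ Ioo (0:ℝ) 1, DifferentiableAt ℝ (fun t => t ^ α * deriv y t) x)
    (heig : ∀ x ∈ Ioo (0:ℝ) 1, deriv (fun t => t ^ α * deriv y t) x = -(L * y x))
    (hint : IntegrableOn (fun x => y x ^ 2) (Ioo 0 1) volume)
    (hone : (∫ x in Ioo (0:ℝ) 1, y x ^ 2) = 1)
    (χ : ℝ → ℝ) (hχsm : ContDiff ℝ 2 χ)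
    (hχ01 : ∀ t, χ t ∈ Icc (0:ℝ) 1)
    (hχ1 : ∀ t ∈ Icc ((3*a+b)/4) ((a+3*b)/4), χ t = 1)
    (hχa : χ a = 0) (hχb : χ b = 0)
    (M : ℝ) (hM0 : 0 ≤ M) (hM : ∀ t ∈ Icc a b, (deriv χ t)^2 ≤ M) :
    L * ((b-a)/2) ≤ (3*L + 4*M) * ∫ x in Ioo a b, y x ^ 2 := by
  set g := fun t : ℝ => t ^ α * deriv y t with hgdef
  -- basic derivative facts
  have hgder : ∀ x ∈ Ioo (0:ℝ) 1, HasDerivAt g (-(L * y x)) x := by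
    intro x hx
    have h1 := (hgd x hx).hasDerivAt
    rwa [heig x hx] at h1
  have hy'eq : ∀ x ∈ Ioo (0:ℝ) 1, deriv y x = x ^ (-α) * g x := by
    intro x hx
    have hx0 := hx.1
    have h1 : x ^ (-α) * g x = (x ^ (-α) * x ^ α) * deriv y x := by
      simp only [hgdef]; ring
    rw [h1, ← Real.rpow_add hx0]
    norm_num
  -- continuity facts
  have hycont : ContinuousOn y (Ioo 0 1) := fun x hx => (hyd x hx).continuousAt.continuousWithinAt
  have hgcont : ContinuousOn g (Ioo 0 1) := fun x hx => (hgd x hx).continuousAt.continuousWithinAt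
  have hy2cont : ContinuousOn (fun t => (y t)^2) (Ioo 0 1) := hycont.pow 2
  have hg2cont : ContinuousOn (fun t => (g t)^2) (Ioo 0 1) := hgcont.pow 2
  have hrpcont : ContinuousOn (fun t : ℝ => t ^ (-α)) (Ioo 0 1) := by
    intro x hx
    exact (Real.continuousAt_rpow_const x (-α) (Or.inl (ne_of_gt hx.1))).continuousWithinAt
  -- the energy functions
  set F := fun t : ℝ => t ^ (1-α) * (g t)^2 + L * (t * (y t)^2) with hFdef
  set Q := fun t : ℝ => t ^ (-α) * (g t)^2 + L * (y t)^2 with hQdef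
  set A := fun t : ℝ => (1-α) * t ^ (-α) * (g t)^2 + L * (y t)^2 with hAdef
  have hAcont : ContinuousOn A (Ioo 0 1) :=
    ((continuousOn_const.mul hrpcont).mul hg2cont).add (continuousOn_const.mul hy2cont)
  have hQcont : ContinuousOn Q (Ioo 0 1) :=
    (hrpcont.mul hg2cont).add (continuousOn_const.mul hy2cont)
  have hFder : ∀ x ∈ Ioo (0:ℝ) 1, HasDerivAt F (A x) x := by
    intro x hx
    have hx0 := hx.1
    have h1 : HasDerivAt (fun t : ℝ => t ^ (1-α)) ((1-α) * x ^ (1-α-1)) x :=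
      Real.hasDerivAt_rpow_const (Or.inl (ne_of_gt hx0))
    have h2 : HasDerivAt (fun t => (g t)^2) ((2:ℕ) * g x ^ (2-1) * (-(L * y x))) x :=
      (hgder x hx).pow 2
    have h3 : HasDerivAt (fun t => (y t)^2) ((2:ℕ) * y x ^ (2-1) * deriv y x) x :=
      (hyd x hx).hasDerivAt.pow 2
    have h4 : HasDerivAt (fun t : ℝ => t * (y t)^2)
        (1 * (y x)^2 + x * ((2:ℕ) * y x ^ (2-1) * deriv y x)) x := (hasDerivAt_id x).mul h3
    have h5 := (h1.mul h2).add (h4.const_mul L)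
    refine hasDerivAt_congr' h5 ?_
    rw [hy'eq x hx]
    have e1 : x ^ (1-α-1) = x ^ (-α) := by norm_num
    have e2 : x ^ (1-α) = x * x ^ (-α) := by
      rw [show (1:ℝ)-α = 1 + (-α) by ring, Real.rpow_add hx0, Real.rpow_one]
    rw [e1, e2]
    simp only [hAdef]
    push_cast
    ring
  have hQder : ∀ x ∈ Ioo (0:ℝ) 1, HasDerivAt Q (-α * x ^ (-α-1) * (g x)^2) x := by
    intro x hx
    have hx0 := hx.1
    have h1 : HasDerivAt (fun t : ℝ => t ^ (-α)) ((-α) * x ^ (-α-1)) x :=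
      Real.hasDerivAt_rpow_const (Or.inl (ne_of_gt hx0))
    have h2 : HasDerivAt (fun t => (g t)^2) ((2:ℕ) * g x ^ (2-1) * (-(L * y x))) x :=
      (hgder x hx).pow 2
    have h3 : HasDerivAt (fun t => (y t)^2) ((2:ℕ) * y x ^ (2-1) * deriv y x) x :=
      (hyd x hx).hasDerivAt.pow 2
    have h5 := (h1.mul h2).add (h3.const_mul L)
    refine hasDerivAt_congr' h5 ?_
    rw [hy'eq x hx]
    have e2 : x ^ (-α) = x * x ^ (-α-1) := by
      calc x ^ (-α) = x ^ (1 + (-α-1)) := by rw [show (1:ℝ) + (-α-1) = -α by ring]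
        _ = x ^ (1:ℝ) * x ^ (-α-1) := Real.rpow_add hx0 1 (-α-1)
        _ = x * x ^ (-α-1) := by rw [Real.rpow_one]
    push_cast
    nlinarith [e2, sq_nonneg (g x)]
  have hQanti : AntitoneOn Q (Ioo 0 1) := by
    apply antitoneOn_of_deriv_nonpos (convex_Ioo 0 1)
    · exact hQcont
    · intro x hx
      rw [isOpen_Ioo.interior_eq] at hx
      exact ((hQder x hx).differentiableAt).differentiableWithinAt
    · intro x hx
      rw [isOpen_Ioo.interior_eq] at hx
      rw [(hQder x hx).deriv]
      have h1 : 0 ≤ x ^ (-α-1) := Real.rpow_nonneg (le_of_lt hx.1) _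
      nlinarith [mul_nonneg (mul_nonneg hα0 h1) (sq_nonneg (g x))]
  -- energy lower bound: Q ≥ L on (0,1)
  have hQge : ∀ x ∈ Ioo (0:ℝ) 1, L ≤ Q x := by
    intro x hx
    obtain ⟨hx0, hx1⟩ := hx
    set s : ℕ → Set ℝ := fun n => Ioo (x/((n:ℝ)+2)) (1 - (1-x)/((n:ℝ)+2)) with hs
    have hmeas : ∀ n, MeasurableSet (s n) := fun n => measurableSet_Ioo
    have hmono : Monotone s := by
      intro m n hmn
      have hmn' : (m:ℝ) ≤ (n:ℝ) := Nat.cast_le.mpr hmn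
      apply Ioo_subset_Ioo
      · apply div_le_div_of_nonneg_left (le_of_lt hx0) (by positivity) (by linarith)
      · have : (1-x)/((n:ℝ)+2) ≤ (1-x)/((m:ℝ)+2) :=
          div_le_div_of_nonneg_left (by linarith) (by positivity) (by linarith)
        linarith
    have hunion : (⋃ n, s n) = Ioo (0:ℝ) 1 := by
      ext t
      simp only [hs, mem_iUnion, mem_Ioo]
      constructor
      · rintro ⟨n, h1, h2⟩
        have hp : (0:ℝ) < (n:ℝ)+2 := by positivity
        constructor
        · exact lt_trans (div_pos hx0 hp) h1
        · have h3 : 0 < (1-x)/((n:ℝ)+2) := div_pos (by linarith) hp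
          linarith
      · rintro ⟨ht0, ht1⟩
        obtain ⟨n, hn⟩ := exists_nat_gt (max (x/t) ((1-x)/(1-t)))
        refine ⟨n, ?_, ?_⟩
        · have h1 : x/t < (n:ℝ)+2 :=
            lt_trans (lt_of_le_of_lt (le_max_left _ _) hn) (by linarith)
          have h2 := (div_lt_iff₀ ht0).1 h1
          rw [div_lt_iff₀ (by positivity : (0:ℝ) < (n:ℝ)+2)]
          linarith
        · have h1 : (1-x)/(1-t) < (n:ℝ)+2 :=
            lt_trans (lt_of_le_of_lt (le_max_right _ _) hn) (by linarith)
          have h2 := (div_lt_iff₀ (by linarith : (0:ℝ) < 1-t)).1 h1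
          have h3 : (1-x)/((n:ℝ)+2) < 1-t := by
            rw [div_lt_iff₀ (by positivity : (0:ℝ) < (n:ℝ)+2)]
            linarith
          linarith
    have htend : Tendsto (fun n => ∫ t in s n, y t ^ 2) atTop (𝓝 1) := by
      have h := tendsto_setIntegral_of_monotone hmeas hmono (by rw [hunion]; exact hint)
      rwa [hunion, hone] at h
    have hbound : ∀ n : ℕ, L * ∫ t in s n, y t ^ 2 ≤ Q x := by
      intro n
      set δ := x/((n:ℝ)+2) with hδ
      set η := 1 - (1-x)/((n:ℝ)+2) with hη
      have h2 : (0:ℝ) < (n:ℝ)+2 := by positivity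
      have hδ0 : 0 < δ := by rw [hδ]; exact div_pos hx0 h2
      have hδx : δ ≤ x := by
        rw [hδ, div_le_iff₀ h2]; nlinarith
      have hxη : x ≤ η := by
        have h3 : (1-x)/((n:ℝ)+2) ≤ 1-x := by
          rw [div_le_iff₀ h2]; nlinarith
        rw [hη]; linarith
      have hη1 : η < 1 := by
        have h3 : 0 < (1-x)/((n:ℝ)+2) := div_pos (by linarith) h2
        rw [hη]; linarith
      have hη0 : 0 < η := lt_of_lt_of_le hx0 hxη
      have hδη : δ ≤ η := le_trans hδx hxη
      have hsub : uIcc δ η ⊆ Ioo (0:ℝ) 1 := by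
        rw [uIcc_of_le hδη]
        intro t ht
        exact ⟨lt_of_lt_of_le hδ0 ht.1, lt_of_le_of_lt ht.2 hη1⟩
      have hFTC := intervalIntegral.integral_eq_sub_of_hasDerivAt
          (fun t ht => hFder t (hsub ht)) ((hAcont.mono hsub).intervalIntegrable)
      have hmono_int : (∫ t in δ..η, L * y t ^ 2) ≤ ∫ t in δ..η, A t := by
        apply intervalIntegral.integral_mono_on hδη
        · exact ((continuousOn_const.mul hy2cont).mono hsub).intervalIntegrable
        · exact (hAcont.mono hsub).intervalIntegrable
        · intro t ht
          have ht' : t ∈ Ioo (0:ℝ) 1 := hsub (by rw [uIcc_of_le hδη]; exact ht)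
          have h1 : 0 ≤ t ^ (-α) := Real.rpow_nonneg (le_of_lt ht'.1) _
          simp only [hAdef]
          nlinarith [mul_nonneg (mul_nonneg (sub_nonneg.2 hα1.le) h1) (sq_nonneg (g t))]
      have hconst : (∫ t in δ..η, L * y t ^ 2) = L * ∫ t in δ..η, y t ^ 2 :=
        intervalIntegral.integral_const_mul L _
      have hFδ : 0 ≤ F δ := by
        simp only [hFdef]
        have h1 : 0 ≤ δ ^ (1-α) := Real.rpow_nonneg (le_of_lt hδ0) _
        nlinarith [mul_nonneg h1 (sq_nonneg (g δ)),
          mul_nonneg (mul_nonneg hL.le hδ0.le) (sq_nonneg (y δ))]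
      have hFη : F η ≤ Q η := by
        simp only [hFdef, hQdef]
        have h1 : 0 ≤ η ^ (-α) := Real.rpow_nonneg (le_of_lt hη0) _
        have e2 : η ^ (1-α) = η * η ^ (-α) := by
          calc η ^ (1-α) = η ^ (1 + (-α)) := by rw [show (1:ℝ) + (-α) = 1 - α by ring]
            _ = η ^ (1:ℝ) * η ^ (-α) := Real.rpow_add hη0 1 (-α)
            _ = η * η ^ (-α) := by rw [Real.rpow_one]
        rw [e2]
        nlinarith [mul_nonneg (mul_nonneg (sub_nonneg.2 hη1.le) h1) (sq_nonneg (g η)),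
          mul_nonneg (mul_nonneg hL.le (sub_nonneg.2 hη1.le)) (sq_nonneg (y η))]
      have hQmono : Q η ≤ Q x := hQanti ⟨hx0, hx1⟩ ⟨hη0, hη1⟩ hxη
      have hIeq : (∫ t in δ..η, y t ^ 2) = ∫ t in s n, y t ^ 2 := by
        rw [intervalIntegral.integral_of_le hδη, integral_Ioc_eq_integral_Ioo]
      calc L * ∫ t in s n, y t ^ 2 = L * ∫ t in δ..η, y t ^ 2 := by rw [hIeq]
        _ = ∫ t in δ..η, L * y t ^ 2 := hconst.symm
        _ ≤ ∫ t in δ..η, A t := hmono_int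
        _ = F η - F δ := hFTC
        _ ≤ F η := by linarith
        _ ≤ Q η := hFη
        _ ≤ Q x := hQmono
    have hfin := le_of_tendsto (htend.const_mul L) (Eventually.of_forall hbound)
    simpa using hfin
  -- geometry
  have hA1 : a < (3*a+b)/4 := by linarith
  have hA2 : (3*a+b)/4 ≤ (a+3*b)/4 := by linarith
  have hA3 : (a+3*b)/4 < b := by linarith
  set p := (3*a+b)/4 with hpdef
  set q := (a+3*b)/4 with hqdef
  have habsub : uIcc a b ⊆ Ioo (0:ℝ) 1 := by
    rw [uIcc_of_le hab.le]
    intro t ht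
    exact ⟨lt_of_lt_of_le ha ht.1, lt_of_le_of_lt ht.2 hb⟩
  have hpqsub : uIcc p q ⊆ Ioo (0:ℝ) 1 := by
    rw [uIcc_of_le hA2]
    intro t ht
    refine ⟨?_, ?_⟩
    · have h9 := ht.1; rw [hpdef] at h9; linarith
    · have h9 := ht.2; rw [hqdef] at h9; linarith
  have hχd : ∀ t : ℝ, HasDerivAt χ (deriv χ t) t :=
    fun t => ((hχsm.differentiable (by norm_num)) t).hasDerivAt
  have hχ'cont : Continuous (deriv χ) := hχsm.continuous_deriv (by norm_num)
  have hχcont : Continuous χ := hχsm.continuous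
  set f1 := fun t : ℝ => χ t ^ 2 * t ^ (-α) * g t ^ 2 with hf1def
  set f2 := fun t : ℝ => L * χ t ^ 2 * y t ^ 2 - 2 * χ t * deriv χ t * g t * y t with hf2def
  set B := fun t : ℝ => f1 t - f2 t with hBdef
  set H := fun t : ℝ => g t * (χ t ^ 2 * y t) with hHdef
  have hHder : ∀ t ∈ Ioo (0:ℝ) 1, HasDerivAt H (B t) t := by
    intro t ht
    have h1 := (hgder t ht).mul (((hχd t).pow 2).mul (hyd t ht).hasDerivAt)
    refine hasDerivAt_congr' h1 ?_
    rw [hy'eq t ht]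
    simp only [hBdef, hf1def, hf2def]
    push_cast
    simp only [Pi.mul_apply, Pi.pow_apply]
    ring
  have hc1 : ContinuousOn f1 (Ioo 0 1) :=
    (((hχcont.pow 2).continuousOn.mul hrpcont).mul hg2cont)
  have hc2 : ContinuousOn f2 (Ioo 0 1) :=
    ((continuousOn_const.mul (hχcont.pow 2).continuousOn).mul hy2cont).sub
      (((((continuousOn_const.mul hχcont.continuousOn).mul hχ'cont.continuousOn).mul
        hgcont).mul hycont))
  have hBcont : ContinuousOn B (Ioo 0 1) := hc1.sub hc2
  have hint_f1 : IntervalIntegrable f1 volume a b := (hc1.mono habsub).intervalIntegrable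
  have hint_f2 : IntervalIntegrable f2 volume a b := (hc2.mono habsub).intervalIntegrable
  have hy2int : IntervalIntegrable (fun t => y t ^ 2) volume a b :=
    (hy2cont.mono habsub).intervalIntegrable
  have hFTC2 : (∫ t in a..b, B t) = H b - H a :=
    intervalIntegral.integral_eq_sub_of_hasDerivAt (fun t ht => hHder t (habsub ht))
      ((hBcont.mono habsub).intervalIntegrable)
  have hH0 : (∫ t in a..b, B t) = 0 := by
    rw [hFTC2]
    simp only [hHdef]
    rw [hχa, hχb]
    ring
  have heq12 : (∫ t in a..b, f1 t) = ∫ t in a..b, f2 t := by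
    have h := intervalIntegral.integral_sub hint_f1 hint_f2
    rw [← hBdef] at h
    rw [hH0] at h
    linarith [h]
  -- pointwise Cauchy-Schwarz / Young estimate
  have hpt : ∀ t ∈ Icc a b, f2 t ≤ (L + 2*M) * y t ^ 2 + (1/2) * f1 t := by
    intro t ht
    have ht' : t ∈ Ioo (0:ℝ) 1 := habsub (by rw [uIcc_of_le hab.le]; exact ht)
    have htP : 0 ≤ t ^ (-α) := Real.rpow_nonneg ht'.1.le _
    have htR0 : 0 ≤ t ^ α := Real.rpow_nonneg ht'.1.le _
    have htR1 : t ^ α ≤ 1 := Real.rpow_le_one ht'.1.le ht'.2.le hα0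
    have hPR : t ^ (-α) * t ^ α = 1 := by
      rw [← Real.rpow_add ht'.1]
      norm_num
    obtain ⟨hχt0, hχt1⟩ := hχ01 t
    have hvM := hM t ht
    simp only [hf1def, hf2def]
    set u := χ t with hu
    set v := deriv χ t with hv
    set G := g t with hG
    set Y := y t with hY
    set w := t ^ (-(α/2)) with hwdef
    set z := t ^ (α/2) with hzdef
    have hwz : w * z = 1 := by
      rw [hwdef, hzdef, ← Real.rpow_add ht'.1, show -(α/2) + α/2 = 0 by ring,
        Real.rpow_zero]
    have hw2 : w^2 = t ^ (-α) := by
      rw [hwdef, sq, ← Real.rpow_add ht'.1, show -(α/2) + -(α/2) = -α by ring]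
    have hz2 : z^2 = t ^ α := by
      rw [hzdef, sq, ← Real.rpow_add ht'.1, show α/2 + α/2 = α by ring]
    have hs2 : u^2 * t^(-α) * G^2 = (u*w*G)^2 := by rw [← hw2]; ring
    have hz1 : u*v*G*Y = (u*w*G)*(v*z*Y) := by linear_combination (-(u*v*G*Y)) * hwz
    have hkey : -(2*((u*w*G)*(v*z*Y))) ≤ (1/2)*(u*w*G)^2 + 2*(v*z*Y)^2 := by
      nlinarith only [sq_nonneg (u*w*G + 2*(v*z*Y))]
    have hvz : (v*z*Y)^2 ≤ M*Y^2 := by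
      have h8 : (v*z*Y)^2 = v^2*z^2*Y^2 := by ring
      rw [h8, hz2]
      nlinarith only [mul_nonneg (sub_nonneg.2 hvM) (sq_nonneg Y),
        mul_nonneg (mul_nonneg (sub_nonneg.2 htR1) (sq_nonneg v)) (sq_nonneg Y)]
    have hkey2 : -(2*(u*v*G*Y)) ≤ (1/2)*(u^2*t^(-α)*G^2) + 2*(M*Y^2) := by
      rw [hz1, hs2]
      linarith only [hkey, hvz]
    have hu2 : u^2 ≤ 1 := by nlinarith only [hχt0, hχt1]
    have hLu : L*u^2*Y^2 ≤ L*Y^2 := by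
      nlinarith only [mul_nonneg (mul_nonneg hL.le (sub_nonneg.2 hu2)) (sq_nonneg Y)]
    linarith only [hkey2, hLu]
  have hbound2 : (∫ t in a..b, f2 t) ≤ (L + 2*M) * (∫ t in a..b, y t ^ 2)
      + (1/2) * ∫ t in a..b, f1 t := by
    have h1 : (∫ t in a..b, f2 t) ≤ ∫ t in a..b, ((L + 2*M) * y t ^ 2 + (1/2) * f1 t) := by
      apply intervalIntegral.integral_mono_on hab.le hint_f2
      · exact (hy2int.const_mul _).add (hint_f1.const_mul _)
      · exact hpt
    rw [intervalIntegral.integral_add (hy2int.const_mul _) (hint_f1.const_mul _),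
      intervalIntegral.integral_const_mul, intervalIntegral.integral_const_mul] at h1
    exact h1
  have hCacc : (∫ t in a..b, f1 t) ≤ (2*L + 4*M) * ∫ t in a..b, y t ^ 2 := by
    rw [heq12]
    linarith [hbound2, heq12]
  -- lower bound for the energy integral on [p,q]
  have hconst_le : L * ((b-a)/2) ≤ ∫ t in p..q, Q t := by
    have h1 : (∫ _t in p..q, L) ≤ ∫ t in p..q, Q t := by
      apply intervalIntegral.integral_mono_on hA2
      · exact intervalIntegrable_const
      · exact (hQcont.mono hpqsub).intervalIntegrable
      · intro t ht
        exact hQge t (hpqsub (by rw [uIcc_of_le hA2]; exact ht))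
    rw [intervalIntegral.integral_const] at h1
    have h2 : (q - p) = (b-a)/2 := by rw [hpdef, hqdef]; ring
    rw [h2] at h1
    rw [smul_eq_mul] at h1
    linarith [h1]
  have hQsplit : (∫ t in p..q, Q t)
      = (∫ t in p..q, t ^ (-α) * g t ^ 2) + L * ∫ t in p..q, y t ^ 2 := by
    simp only [hQdef]
    rw [intervalIntegral.integral_add (f := fun t => t ^ (-α) * g t ^ 2) (g := fun t => L * y t ^ 2)
      ((hrpcont.mul hg2cont).mono hpqsub).intervalIntegrable
      ((continuousOn_const.mul hy2cont).mono hpqsub).intervalIntegrable,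
      intervalIntegral.integral_const_mul]
  have hmid1 : (∫ t in p..q, t ^ (-α) * g t ^ 2) ≤ ∫ t in a..b, f1 t := by
    have e1 : (∫ t in p..q, t ^ (-α) * g t ^ 2) = ∫ t in p..q, f1 t := by
      apply intervalIntegral.integral_congr
      intro t ht
      rw [uIcc_of_le hA2] at ht
      simp only [hf1def]
      rw [hχ1 t ht]
      ring
    rw [e1]
    apply intervalIntegral.integral_mono_interval hA1.le hA2 hA3.le ?_ hint_f1
    filter_upwards [ae_restrict_mem measurableSet_Ioc] with t ht
    have ht0 : 0 < t := lt_trans ha ht.1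
    have h3 : 0 ≤ t ^ (-α) := Real.rpow_nonneg ht0.le _
    simp only [hf1def]
    positivity
  have hmid2 : (∫ t in p..q, y t ^ 2) ≤ ∫ t in a..b, y t ^ 2 := by
    apply intervalIntegral.integral_mono_interval hA1.le hA2 hA3.le ?_ hy2int
    filter_upwards with t
    positivity
  have hfinal : L * ((b-a)/2) ≤ (3*L+4*M) * ∫ t in a..b, y t ^ 2 := by
    have h1 := hconst_le
    rw [hQsplit] at h1
    have h2 : L * ∫ t in p..q, y t ^ 2 ≤ L * ∫ t in a..b, y t ^ 2 :=
      mul_le_mul_of_nonneg_left hmid2 hL.le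
    nlinarith [hCacc, hmid1, h1, h2]
  have hconv : (∫ x in Ioo a b, y x ^ 2) = ∫ t in a..b, y t ^ 2 := by
    rw [intervalIntegral.integral_of_le hab.le, integral_Ioc_eq_integral_Ioo]
  rw [hconv]
  exact hfinal


set_option maxHeartbeats 1000000 in
/-- **Uniform lower bound for eigenfunctions in the weakly degenerate case.**
Let `0 < a < b < 1`.  There exists `c > 0`, depending only on `(a,b)`, such that for all
`α ∈ [0,1)` and all `j`, `‖Φ_j‖²_{L²(a,b)} ≥ c`; in particular
`‖Φ_j‖²_{L²(a,b)} ≥ (c/2)(2-α)`. -/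
theorem eigenfunction_lower_bound
    (a b : ℝ) (ha : 0 < a) (hab : a < b) (hb : b < 1)
    (lam : ℝ → ℕ → ℝ) (Φ : ℝ → ℕ → ℝ → ℝ)
    (hsys : ∀ α ∈ Ico (0:ℝ) 1, EigenSystem α (lam α) (Φ α))
    (c₁ : ℝ) (hc₁ : 0 < c₁)
    (hlam1 : ∀ α ∈ Ico (0:ℝ) 1, c₁ ≤ lam α 0) :
    ∃ c > (0:ℝ), ∀ α ∈ Ico (0:ℝ) 1, ∀ j : ℕ,
      c ≤ (∫ x in Ioo a b, (Φ α j x) ^ 2) ∧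
      c / 2 * (2 - α) ≤ ∫ x in Ioo a b, (Φ α j x) ^ 2 := by
  have hr1 : (0:ℝ) < (b-a)/4 := by linarith
  have hr2 : (b-a)/4 < (b-a)/2 := by linarith
  set χb : ContDiffBump ((a+b)/2) := ⟨(b-a)/4, (b-a)/2, hr1, hr2⟩ with hχbdef
  set χ : ℝ → ℝ := fun t => χb t with hχdef
  have hχsm : ContDiff ℝ 2 χ := χb.contDiff
  have hχ'cont : Continuous (deriv χ) := hχsm.continuous_deriv (by norm_num)
  obtain ⟨t₀, ht₀, hmax⟩ := isCompact_Icc.exists_isMaxOn (nonempty_Icc.2 hab.le)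
    ((hχ'cont.pow 2).continuousOn (s := Icc a b))
  set M := (deriv χ t₀)^2 with hMdef
  have hM0 : 0 ≤ M := sq_nonneg _
  have hM : ∀ t ∈ Icc a b, (deriv χ t)^2 ≤ M := fun t ht => hmax ht
  have h4M : 0 < 3*c₁ + 4*M := by linarith
  set c := c₁ * ((b-a)/2) / (3*c₁ + 4*M) with hcdef
  have hc : 0 < c := div_pos (mul_pos hc₁ (by linarith)) h4M
  refine ⟨c, hc, ?_⟩
  rintro α ⟨hα0, hα1⟩ j
  have ES := hsys α ⟨hα0, hα1⟩
  have hL0 : 0 < lam α j := lt_of_lt_of_le ES.pos (ES.mono (Nat.zero_le j))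
  have hLc : c₁ ≤ lam α j := le_trans (hlam1 α ⟨hα0, hα1⟩) (ES.mono (Nat.zero_le j))
  have horth := ES.orthonormal j j
  simp only [if_pos rfl] at horth
  have hIntyy : IntegrableOn (fun x => Φ α j x * Φ α j x) (Ioo 0 1) volume := by
    by_contra hI
    rw [integral_undef hI] at horth
    norm_num at horth
  have hint : IntegrableOn (fun x => Φ α j x ^ 2) (Ioo 0 1) volume := by
    simpa [pow_two] using hIntyy
  have hone : (∫ x in Ioo (0:ℝ) 1, Φ α j x ^ 2) = 1 := by
    simp only [pow_two]
    exact horth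
  have hχ01 : ∀ t, χ t ∈ Icc (0:ℝ) 1 := fun t => ⟨χb.nonneg, χb.le_one⟩
  have hIcc : Metric.closedBall ((a+b)/2) ((b-a)/4) = Icc ((3*a+b)/4) ((a+3*b)/4) := by
    rw [Real.closedBall_eq_Icc]
    congr 1 <;> ring
  have hχ1 : ∀ t ∈ Icc ((3*a+b)/4) ((a+3*b)/4), χ t = 1 := by
    intro t ht
    refine χb.one_of_mem_closedBall ?_
    show t ∈ Metric.closedBall ((a+b)/2) χb.rIn
    have : χb.rIn = (b-a)/4 := by rw [hχbdef]
    rw [this, hIcc]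
    exact ht
  have hsupp : Function.support χ = Ioo a b := by
    have h1 : Function.support χ = Metric.ball ((a+b)/2) χb.rOut := χb.support_eq
    have h2 : χb.rOut = (b-a)/2 := by rw [hχbdef]
    rw [h1, h2, Real.ball_eq_Ioo]
    congr 1 <;> ring
  have hχa : χ a = 0 := by
    apply Function.notMem_support.1
    rw [hsupp]
    simp
  have hχb0 : χ b = 0 := by
    apply Function.notMem_support.1
    rw [hsupp]
    simp
  have hkey := key_lower_bound a b ha hab hb α hα0 hα1 (lam α j) hL0 (Φ α j)
    (fun x hx => ES.diff j x ⟨hx.1, hx.2.le⟩) (ES.flux_diff j) (ES.eigen j)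
    hint hone χ hχsm hχ01 hχ1 hχa hχb0 M hM0 hM
  set I := ∫ x in Ioo a b, Φ α j x ^ 2 with hIdef
  have h3 : 0 < 3 * lam α j + 4*M := by linarith
  have hcI : c ≤ I := by
    rw [hcdef, div_le_iff₀ h4M]
    have h5 : c₁ * ((b-a)/2) * (3*lam α j + 4*M)
        ≤ lam α j * ((b-a)/2) * (3*c₁+4*M) := by
      nlinarith [mul_nonneg (mul_nonneg (by linarith : (0:ℝ) ≤ (b-a)/2) hM0)
        (sub_nonneg.2 hLc)]
    have h6 : lam α j * ((b-a)/2) ≤ (3*lam α j + 4*M) * I := hkey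
    nlinarith [mul_le_mul_of_nonneg_right h6 (le_of_lt h4M), h3, h5]
  refine ⟨hcI, ?_⟩
  nlinarith [mul_nonneg hc.le hα0, hcI]
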